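/- Let (E,C) be a countable separated graph and S ⊆ C_fin. There exists an (E,C,S)-algebraic branching system X ⊆ ℝ additionally satisfying: (1) R_e ∩ R_f ≠ ∅ for e ∈ X, f ∈ Y with X, Y ∈ C_v and X ≠ Y; (2) for each X ∈ C_v \ S, ⋃_{e∈X} R_e ⊊ D_v; (3) for distinct X, Y ∈ C_v \ S, ⋃_{e∈X} R_e ≠ ⋃_{f∈Y} R_f. -/

import Mathlib

open Set Cardinal Function

namespace BranchAux

universe u v

variable {V : Type u} {E : Type v}

/-- The set of allowed values of the coordinate of a class `Y` for a point of `D_v`. -/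
def Allowed (s : E → V) (S : Set (Set E)) (v : V) (Y : Set E) : Set (Option E) :=
  {o | (o = none ∧ ((∃ e ∈ Y, s e = v) → Y ∉ S)) ∨ ∃ e ∈ Y, s e = v ∧ o = some e}

lemma allowed_nonempty (s : E → V) (S : Set (Set E)) (v : V) (Y : Set E) :
    (Allowed s S v Y).Nonempty := by
  classical
  by_cases h : (∃ e ∈ Y, s e = v) ∧ Y ∈ S
  · obtain ⟨⟨e, he, hse⟩, -⟩ := h
    exact ⟨some e, Or.inr ⟨e, he, hse, rfl⟩⟩
  · exact ⟨none, Or.inl ⟨rfl, fun hat hS => h ⟨hat, hS⟩⟩⟩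

/-- The ambient type of points. -/
def Pt (V : Type u) (E : Type v) (C : Set (Set E)) : Type (max u v) :=
  V × ({Y : Set E // Y ∈ C} → Option E) × ℝ

variable (C : Set (Set E))

def Dset (s : E → V) (S : Set (Set E)) (v : V) : Set (Pt V E C) :=
  {p | p.1 = v ∧ ∀ Y : {Y : Set E // Y ∈ C}, p.2.1 Y ∈ Allowed s S v Y.1}

def Rset (s : E → V) (S : Set (Set E)) (cl : E → {Y : Set E // Y ∈ C}) (e : E) :
    Set (Pt V E C) :=
  {p | p ∈ Dset C s S (s e) ∧ p.2.1 (cl e) = some e}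

lemma mk_Pt_le [Countable V] [Countable E] [Countable {Y : Set E // Y ∈ C}] :
    #(Pt V E C) ≤ Cardinal.continuum.{max u v} := by
  classical
  obtain ⟨eV⟩ := countable_iff_nonempty_embedding.mp ‹Countable V›
  obtain ⟨eE⟩ := countable_iff_nonempty_embedding.mp ‹Countable E›
  obtain ⟨eC⟩ := countable_iff_nonempty_embedding.mp ‹Countable {Y : Set E // Y ∈ C}›
  have hext : ∃ ext : ({Y : Set E // Y ∈ C} → Option ℕ) → (ℕ → Option ℕ),
      Function.Injective ext := by
    refine ⟨fun g n => if h : ∃ c, eC c = n then g h.choose else none, ?_⟩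
    intro g g' hgg'
    funext c
    have h : ∃ c', eC c' = eC c := ⟨c, rfl⟩
    have hc : h.choose = c := eC.injective h.choose_spec
    have := congrFun hgg' (eC c)
    simp only [dif_pos h] at this
    rwa [hc] at this
  obtain ⟨ext, hext⟩ := hext
  have hemb : Nonempty (Pt V E C ↪ ℕ × (ℕ → Option ℕ) × ℝ) := by
    refine ⟨⟨fun p => (eV p.1, ext (fun c => (p.2.1 c).map eE), p.2.2), ?_⟩⟩
    rintro ⟨a₁, b₁, c₁⟩ ⟨a₂, b₂, c₂⟩ h
    simp only [Prod.mk.injEq] at h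
    obtain ⟨h1, h2, h3⟩ := h
    have hb : b₁ = b₂ := by
      have := hext h2
      funext c
      have := congrFun this c
      exact Option.map_injective eE.injective this
    exact Prod.ext (eV.injective h1) (Prod.ext hb h3)
  have h1 := Cardinal.lift_mk_le'.mpr hemb
  have hΩ : #(ℕ × (ℕ → Option ℕ) × ℝ) ≤ Cardinal.continuum.{0} := by
    rw [mk_prod, mk_prod, mk_real, mk_arrow]
    simp only [Cardinal.lift_uzero, Cardinal.lift_id, mk_nat]
    have harrow : #(Option ℕ) ^ (ℵ₀ : Cardinal) ≤ 𝔠 := by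
      calc #(Option ℕ) ^ (ℵ₀ : Cardinal) ≤ ℵ₀ ^ (ℵ₀ : Cardinal) :=
            Cardinal.power_le_power_right mk_le_aleph0
        _ = 𝔠 := aleph0_power_aleph0
    calc ℵ₀ * (#(Option ℕ) ^ (ℵ₀ : Cardinal) * 𝔠) ≤ 𝔠 * (𝔠 * 𝔠) := by
          exact mul_le_mul' aleph0_le_continuum (mul_le_mul' harrow le_rfl)
      _ = 𝔠 := by rw [continuum_mul_self, continuum_mul_self]
  rw [Cardinal.lift_uzero] at h1
  calc #(Pt V E C) ≤ Cardinal.lift.{max u v} #(ℕ × (ℕ → Option ℕ) × ℝ) := h1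
    _ ≤ Cardinal.lift.{max u v} Cardinal.continuum.{0} := Cardinal.lift_le.mpr hΩ
    _ = Cardinal.continuum.{max u v} := Cardinal.lift_continuum

lemma mk_cyl [Countable V] [Countable E] [Countable {Y : Set E // Y ∈ C}]
    {A : Set (Pt V E C)} (h1 : A.Nonempty)
    (h2 : ∀ p ∈ A, ∀ t : ℝ, ((p.1, p.2.1, t) : Pt V E C) ∈ A) :
    #↥A = Cardinal.continuum.{max u v} := by
  apply le_antisymm
  · exact (Cardinal.mk_subtype_le _).trans (mk_Pt_le C)
  · obtain ⟨p₀, hp₀⟩ := h1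
    have hemb : Nonempty (ℝ ↪ ↥A) := by
      refine ⟨⟨fun t => ⟨(p₀.1, p₀.2.1, t), h2 _ hp₀ t⟩, ?_⟩⟩
      intro a b h
      simpa using congrArg (fun q => q.1.2.2) h
    have := Cardinal.lift_mk_le'.mpr hemb
    rwa [mk_real, Cardinal.lift_continuum, Cardinal.lift_uzero] at this

lemma cyl_equiv [Countable V] [Countable E] [Countable {Y : Set E // Y ∈ C}]
    {A B : Set (Pt V E C)} (hA1 : A.Nonempty)
    (hA2 : ∀ p ∈ A, ∀ t : ℝ, ((p.1, p.2.1, t) : Pt V E C) ∈ A)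
    (hB1 : B.Nonempty)
    (hB2 : ∀ p ∈ B, ∀ t : ℝ, ((p.1, p.2.1, t) : Pt V E C) ∈ B) :
    Nonempty (↥A ≃ ↥B) :=
  Cardinal.eq.mp (by rw [mk_cyl C hA1 hA2, mk_cyl C hB1 hB2])

lemma exists_emb [Countable V] [Countable E] [Countable {Y : Set E // Y ∈ C}] :
    Nonempty (Pt V E C ↪ ℝ) := by
  rw [← Cardinal.lift_mk_le', Cardinal.lift_uzero, mk_real, Cardinal.lift_continuum]
  exact mk_Pt_le C

end BranchAux

open BranchAux


/-- For a countable separated graph `(E,C)` and `S ⊆ C_fin` there exists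
an `(E,C,S)`-algebraic branching system `𝕏 ⊆ ℝ` additionally satisfying:
(1) `R_e ∩ R_f ≠ ∅` for `e ∈ X`, `f ∈ Y` with `X, Y ∈ C_v`, `X ≠ Y`;
(2) for each `X ∈ C_v \ S`, `⋃_{e∈X} R_e ⊊ D_v`;
(3) for distinct `X, Y ∈ C_v \ S`, `⋃_{e∈X} R_e ≠ ⋃_{f∈Y} R_f`. -/
theorem exists_branching_system_with_extra_properties
    (V E : Type*) [Countable V] [Countable E] (r s : E → V)
    (C : Set (Set E))
    (hC1 : ∀ Y ∈ C, Y.Nonempty)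
    (hC2 : ∀ Y ∈ C, ∀ e ∈ Y, ∀ f ∈ Y, s e = s f)
    (hC3 : ∀ Y ∈ C, ∀ Z ∈ C, Y ≠ Z → Disjoint Y Z)
    (hC4 : ∀ e : E, ∃ Y ∈ C, e ∈ Y)
    (S : Set (Set E)) (hSC : S ⊆ C) (hSfin : ∀ X ∈ S, X.Finite) :
    ∃ (𝕏 : Set ℝ) (R : E → Set ℝ) (D : V → Set ℝ) (f : E → ℝ → ℝ),
      (∀ e, R e ⊆ 𝕏) ∧ (∀ v, D v ⊆ 𝕏) ∧
      -- the branching-system conditions of Definition 2.1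
      (∀ Y ∈ C, ∀ e ∈ Y, ∀ d ∈ Y, e ≠ d → Disjoint (R e) (R d)) ∧
      (∀ u v : V, u ≠ v → Disjoint (D u) (D v)) ∧
      (∀ e, R e ⊆ D (s e)) ∧
      (∀ Y ∈ S, ∀ v : V, (∀ e ∈ Y, s e = v) → D v = ⋃ e ∈ Y, R e) ∧
      (∀ e, Set.BijOn (f e) (D (r e)) (R e)) ∧
      -- (1) nonempty intersections across distinct classes at the same vertex
      (∀ X ∈ C, ∀ Y ∈ C, X ≠ Y →
        ∀ e ∈ X, ∀ f' ∈ Y, s e = s f' → (R e ∩ R f').Nonempty) ∧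
      -- (2) strict inclusion for classes not in S
      (∀ X ∈ C, X ∉ S → ∀ v : V, (∀ e ∈ X, s e = v) → (⋃ e ∈ X, R e) ⊂ D v) ∧
      -- (3) distinct unions for distinct classes (at the same vertex) not in S
      (∀ X ∈ C, X ∉ S → ∀ Y ∈ C, Y ∉ S → X ≠ Y →
        (∀ e ∈ X, ∀ f' ∈ Y, s e = s f') →
        (⋃ e ∈ X, R e) ≠ ⋃ f' ∈ Y, R f') := by
  classical
  haveI hCl : Countable {Y : Set E // Y ∈ C} := by
    have hinj : Function.Injective
        (fun Y : {Y : Set E // Y ∈ C} => (hC1 Y.1 Y.2).choose) := by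
      intro Y Z h
      by_contra hne
      have h' : (hC1 Y.1 Y.2).choose = (hC1 Z.1 Z.2).choose := h
      have hmem : (hC1 Y.1 Y.2).choose ∈ Z.1 := by
        rw [h']; exact (hC1 Z.1 Z.2).choose_spec
      exact Set.disjoint_left.mp (hC3 Y.1 Y.2 Z.1 Z.2 (fun hh => hne (Subtype.ext hh)))
        (hC1 Y.1 Y.2).choose_spec hmem
    exact hinj.countable
  -- the class of an edge
  let cl : E → {Y : Set E // Y ∈ C} := fun e => ⟨(hC4 e).choose, (hC4 e).choose_spec.1⟩
  have hclmem : ∀ e, e ∈ (cl e).1 := fun e => (hC4 e).choose_spec.2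
  have hcl : ∀ (e : E) (Y) (hY : Y ∈ C), e ∈ Y → cl e = ⟨Y, hY⟩ := by
    intro e Y hY he
    by_contra hne
    exact Set.disjoint_left.mp
      (hC3 (cl e).1 (cl e).2 Y hY (fun hh => hne (Subtype.ext hh))) (hclmem e) he
  -- base point
  let base : V → {Y : Set E // Y ∈ C} → Option E :=
    fun v Y => (allowed_nonempty s S v Y.1).choose
  have hbase : ∀ v Y, base v Y ∈ Allowed s S v Y.1 :=
    fun v Y => (allowed_nonempty s S v Y.1).choose_spec
  have hupd : ∀ (v : V) (c : {Y : Set E // Y ∈ C}) (o), o ∈ Allowed s S v c.1 →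
      ∀ Y, Function.update (base v) c o Y ∈ Allowed s S v Y.1 := by
    intro v c o ho Y
    by_cases hY : Y = c
    · subst hY; simpa using ho
    · rw [Function.update_of_ne hY]; exact hbase v Y
  have hupd2 : ∀ (v : V) (c₁ c₂ : {Y : Set E // Y ∈ C}) (o₁ o₂), c₂ ≠ c₁ →
      o₁ ∈ Allowed s S v c₁.1 → o₂ ∈ Allowed s S v c₂.1 →
      ∀ Y, Function.update (Function.update (base v) c₁ o₁) c₂ o₂ Y ∈ Allowed s S v Y.1 := by
    intro v c₁ c₂ o₁ o₂ hne h1 h2 Y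
    by_cases hY : Y = c₂
    · subst hY; simpa using h2
    · rw [Function.update_of_ne hY]
      exact hupd v c₁ o₁ h1 Y
  -- cylinder properties
  have hcylD : ∀ v, ∀ p ∈ Dset C s S v, ∀ t : ℝ,
      ((p.1, p.2.1, t) : Pt V E C) ∈ Dset C s S v := by
    rintro v ⟨a, b, c⟩ ⟨h1, h2⟩ t
    exact ⟨h1, h2⟩
  have hcylR : ∀ e, ∀ p ∈ Rset C s S cl e, ∀ t : ℝ,
      ((p.1, p.2.1, t) : Pt V E C) ∈ Rset C s S cl e := by
    rintro e ⟨a, b, c⟩ ⟨⟨h1, h2⟩, h3⟩ t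
    exact ⟨⟨h1, h2⟩, h3⟩
  have hDne : ∀ v, (Dset C s S v).Nonempty :=
    fun v => ⟨(v, base v, 0), rfl, fun Y => hbase v Y⟩
  have hRne : ∀ e, (Rset C s S cl e).Nonempty := by
    intro e
    refine ⟨(s e, Function.update (base (s e)) (cl e) (some e), 0),
      ⟨rfl, hupd _ _ _ (Or.inr ⟨e, hclmem e, rfl, rfl⟩)⟩, ?_⟩
    simp
  have hRsubD : ∀ e, Rset C s S cl e ⊆ Dset C s S (s e) := fun e p hp => hp.1
  -- the embedding into ℝ
  obtain ⟨ι⟩ : Nonempty (Pt V E C ↪ ℝ) := exists_emb C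
  -- the bijections
  have hequiv : ∀ e, Nonempty (↥(Dset C s S (r e)) ≃ ↥(Rset C s S cl e)) :=
    fun e => cyl_equiv C (hDne (r e)) (hcylD (r e)) (hRne e) (hcylR e)
  let g : ∀ e, ↥(Dset C s S (r e)) ≃ ↥(Rset C s S cl e) := fun e => (hequiv e).some
  let G : ∀ e, ↥(ι '' Dset C s S (r e)) ≃ ↥(ι '' Rset C s S cl e) := fun e =>
    (Equiv.Set.image ι _ ι.injective).symm.trans
      ((g e).trans (Equiv.Set.image ι _ ι.injective))
  refine ⟨Set.univ, fun e => ι '' Rset C s S cl e, fun v => ι '' Dset C s S v,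
    fun e x => if h : x ∈ ι '' Dset C s S (r e) then ((G e) ⟨x, h⟩ : ℝ) else 0,
    fun _ => Set.subset_univ _, fun _ => Set.subset_univ _, ?_, ?_, ?_, ?_, ?_, ?_, ?_, ?_⟩
  · -- disjointness within a class
    intro Y hY e he d hd hed
    rw [Set.disjoint_image_iff ι.injective]
    rw [Set.disjoint_left]
    intro p hpe hpd
    have h1 := hpe.2
    have h2 := hpd.2
    rw [hcl e Y hY he] at h1
    rw [hcl d Y hY hd] at h2
    rw [h1] at h2
    exact hed (Option.some_injective _ h2)
  · -- disjointness of the D's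
    intro u v huv
    rw [Set.disjoint_image_iff ι.injective, Set.disjoint_left]
    intro p hpu hpv
    exact huv (hpu.1 ▸ hpv.1)
  · -- R e ⊆ D (s e)
    exact fun e => Set.image_mono (hRsubD e)
  · -- D v = union over Y ∈ S
    intro Y hY v hsv
    rw [← Set.image_iUnion₂]
    refine congrArg (ι '' ·) (subset_antisymm ?_ ?_)
    · intro p hp
      obtain ⟨e₀, he₀⟩ := hC1 Y (hSC hY)
      have hat : ∃ e ∈ Y, s e = v := ⟨e₀, he₀, hsv e₀ he₀⟩
      rcases hp.2 ⟨Y, hSC hY⟩ with ⟨hnone, himp⟩ | ⟨e, heY, hse, hsome⟩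
      · exact absurd hY (himp hat)
      · refine Set.mem_iUnion₂.mpr ⟨e, heY, ⟨?_, ?_⟩⟩
        · rw [hse]; exact hp
        · rw [hcl e Y (hSC hY) heY]; exact hsome
    · refine Set.iUnion₂_subset fun e he => ?_
      rw [← hsv e he]
      exact hRsubD e
  · -- bijections
    intro e
    refine ⟨?_, ?_, ?_⟩
    · intro x hx
      simp only [dif_pos hx]
      exact ((G e) ⟨x, hx⟩).2
    · intro x hx y hy hxy
      simp only [dif_pos hx, dif_pos hy] at hxy
      have h2 : (⟨x, hx⟩ : ↥(ι '' Dset C s S (r e))) = ⟨y, hy⟩ :=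
        (G e).injective (Subtype.ext hxy)
      simpa using congrArg Subtype.val h2
    · intro y hy
      have hx := ((G e).symm ⟨y, hy⟩).2
      refine ⟨((G e).symm ⟨y, hy⟩ : ℝ), hx, ?_⟩
      simp only [dif_pos hx]
      have heta : (⟨((G e).symm ⟨y, hy⟩ : ℝ), hx⟩ : ↥(ι '' Dset C s S (r e))) =
          (G e).symm ⟨y, hy⟩ := rfl
      rw [heta, Equiv.apply_symm_apply]
  · -- (1) nonempty intersections
    intro X hX Y hY hXY e he f' hf' hsef
    rw [← Set.image_inter ι.injective]
    apply Set.Nonempty.image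
    have hne : cl f' ≠ cl e := by
      rw [hcl e X hX he, hcl f' Y hY hf']
      intro hh
      exact hXY (congrArg Subtype.val hh).symm
    have hmemD : ((s e, Function.update (Function.update (base (s e)) (cl e) (some e))
        (cl f') (some f'), 0) : Pt V E C) ∈ Dset C s S (s e) :=
      ⟨rfl, hupd2 (s e) (cl e) (cl f') _ _ hne
        (Or.inr ⟨e, hclmem e, rfl, rfl⟩) (Or.inr ⟨f', hclmem f', hsef.symm, rfl⟩)⟩
    refine ⟨_, ⟨hmemD, ?_⟩, ⟨?_, ?_⟩⟩
    · show Function.update (Function.update (base (s e)) (cl e) (some e))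
        (cl f') (some f') (cl e) = some e
      rw [Function.update_of_ne (fun hh => hne hh.symm) , Function.update_self]
    · show _ ∈ Dset C s S (s f')
      rw [← hsef]
      exact hmemD
    · show Function.update (Function.update (base (s e)) (cl e) (some e))
        (cl f') (some f') (cl f') = some f'
      rw [Function.update_self]
  · -- (2) strict inclusion
    intro X hX hXS v hsv
    have hsub' : (⋃ e ∈ X, Rset C s S cl e) ⊆ Dset C s S v := by
      refine Set.iUnion₂_subset fun e he => ?_
      rw [← hsv e he]
      exact hRsubD e
    have hsub : (⋃ e ∈ X, ι '' Rset C s S cl e) ⊆ ι '' Dset C s S v := by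
      rw [← Set.image_iUnion₂]
      exact Set.image_mono hsub'
    rw [Set.ssubset_iff_of_subset hsub]
    have hpD : ((v, Function.update (base v) ⟨X, hX⟩ none, 0) : Pt V E C) ∈
        Dset C s S v := ⟨rfl, hupd v ⟨X, hX⟩ none (Or.inl ⟨rfl, fun _ => hXS⟩)⟩
    refine ⟨ι _, Set.mem_image_of_mem _ hpD, ?_⟩
    intro hmem
    rw [← Set.image_iUnion₂] at hmem
    have hp := ι.injective.mem_set_image.mp hmem
    obtain ⟨e, he, hpe⟩ := Set.mem_iUnion₂.mp hp
    have h2 := hpe.2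
    rw [hcl e X hX he] at h2
    simp at h2
  · -- (3) distinct unions
    intro X hX hXS Y hY hYS hXY hss
    obtain ⟨e₀, he₀⟩ := hC1 X hX
    have hne : (⟨Y, hY⟩ : {Y : Set E // Y ∈ C}) ≠ ⟨X, hX⟩ := by
      intro hh
      exact hXY (congrArg Subtype.val hh).symm
    have hpD : ((s e₀, Function.update (Function.update (base (s e₀)) ⟨X, hX⟩ (some e₀))
        ⟨Y, hY⟩ none, 0) : Pt V E C) ∈ Dset C s S (s e₀) :=
      ⟨rfl, hupd2 (s e₀) ⟨X, hX⟩ ⟨Y, hY⟩ _ _ hne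
        (Or.inr ⟨e₀, he₀, rfl, rfl⟩) (Or.inl ⟨rfl, fun _ => hYS⟩)⟩
    have hpR : ((s e₀, Function.update (Function.update (base (s e₀)) ⟨X, hX⟩ (some e₀))
        ⟨Y, hY⟩ none, 0) : Pt V E C) ∈ Rset C s S cl e₀ := by
      refine ⟨hpD, ?_⟩
      rw [hcl e₀ X hX he₀]
      show Function.update (Function.update (base (s e₀)) ⟨X, hX⟩ (some e₀))
        ⟨Y, hY⟩ none ⟨X, hX⟩ = some e₀
      rw [Function.update_of_ne (fun hh => hne hh.symm), Function.update_self]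
    intro heq
    have h1 : ι _ ∈ ⋃ e ∈ X, ι '' Rset C s S cl e :=
      Set.mem_iUnion₂.mpr ⟨e₀, he₀, Set.mem_image_of_mem _ hpR⟩
    rw [heq, ← Set.image_iUnion₂] at h1
    have h2 := ι.injective.mem_set_image.mp h1
    obtain ⟨f', hf', hpf⟩ := Set.mem_iUnion₂.mp h2
    have h3 := hpf.2
    rw [hcl f' Y hY hf'] at h3
    simp at h3
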